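/- arXiv:0902.1843 — 4 statements merged into one kernel-verified Lean document; each statement's English description precedes it below -/
import Mathlib

section
/- Let n ≥ 3 be odd and d = (n-1)/2. Define the (d+1)×(d+1) matrix A by A_{ij} = cos(2πij/n) for i,j = 0,...,d, and the vector b = (2, 1 - 2cos(2π/n), 2 - 2cos(2π/n), ..., 2 - 2cos(2π/n))^T. Then the vector x with x_0 = (4/n)·d·(1 - cos(2π/n)) and x_i = (4/n)(cos(2π/n) - cos(2πi/n)) for i = 1,...,d satisfies Ax = b and x ≥ 0 componentwise. -/
open Finset Real

private lemma Tsum (n k : ℕ) (hn : 0 < n) (hk : ¬ n ∣ k) :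
    ∑ j ∈ Finset.range n, Real.cos (2 * π * k * j / n) = 0 := by
  have hn' : (n : ℝ) ≠ 0 := Nat.cast_ne_zero.mpr hn.ne'
  set θ : ℝ := 2 * π * k / n with hθ
  set ζ : ℂ := Complex.exp (θ * Complex.I) with hζ
  have hζj : ∀ j : ℕ, ζ ^ j = Complex.exp ((j * θ : ℝ) * Complex.I) := by
    intro j
    rw [hζ, ← Complex.exp_nat_mul]
    push_cast
    ring_nf
  have hζ1 : ζ ≠ 1 := by
    intro h
    rw [hζ, Complex.exp_eq_one_iff] at h
    obtain ⟨m, hm⟩ := h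
    have hI : (Complex.I : ℂ) ≠ 0 := Complex.I_ne_zero
    have hθm : (θ : ℂ) = (m : ℂ) * (2 * π) :=
      mul_right_cancel₀ hI (by linear_combination hm)
    have hθm' : θ = (m : ℝ) * (2 * π) := by exact_mod_cast hθm
    have h2π : (2 * π : ℝ) ≠ 0 := by positivity
    rw [hθ] at hθm'
    have hk' : (k : ℝ) = (m : ℝ) * n := by
      have h := hθm'
      field_simp at h
      have : (2 * π) * (k : ℝ) = (2 * π) * ((m : ℝ) * n) := by rw [h]; ring
      exact mul_left_cancel₀ h2π this
    have hkz : (k : ℤ) = (n : ℤ) * m := by exact_mod_cast (by linarith : (k:ℝ) = (n:ℝ) * m)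
    exact hk (Int.natCast_dvd_natCast.mp ⟨m, hkz⟩)
  have hgeom : ∑ j ∈ Finset.range n, ζ ^ j = (ζ ^ n - 1) / (ζ - 1) := geom_sum_eq hζ1 n
  have hζn : ζ ^ n = 1 := by
    rw [hζj n]
    have : ((n : ℝ) * θ : ℝ) = (k : ℝ) * (2 * π) := by
      rw [hθ]; field_simp
    rw [this]
    have := Complex.exp_int_mul_two_pi_mul_I (k : ℤ)
    rw [← this]
    push_cast
    ring_nf
  have hsum0 : ∑ j ∈ Finset.range n, ζ ^ j = 0 := by
    rw [hgeom, hζn, sub_self, zero_div]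
  calc ∑ j ∈ Finset.range n, Real.cos (2 * π * k * j / n)
      = ∑ j ∈ Finset.range n, (ζ ^ j).re := by
        refine Finset.sum_congr rfl fun j _ => ?_
        rw [hζj j, Complex.exp_ofReal_mul_I_re, hθ]
        congr 1
        field_simp
    _ = (∑ j ∈ Finset.range n, ζ ^ j).re := (Complex.re_sum _ _).symm
    _ = 0 := by rw [hsum0]; rfl

private lemma Ssum (d k : ℕ) (hk : ¬ (2 * d + 1) ∣ k) :
    ∑ j ∈ Finset.Ico 1 (d + 1), Real.cos (2 * π * k * j / (2 * d + 1)) = -(1/2) := by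
  set n := 2 * d + 1 with hn
  have hT := Tsum n k (by omega) hk
  have hsplit : ∑ j ∈ Finset.range n, Real.cos (2 * π * k * j / n)
      = Real.cos 0 + (∑ j ∈ Finset.Ico 1 (d+1), Real.cos (2 * π * k * j / n))
        + ∑ j ∈ Finset.Ico (d+1) n, Real.cos (2 * π * k * j / n) := by
    rw [Finset.range_eq_Ico, ← Finset.sum_Ico_consecutive _ (by omega : 0 ≤ d+1) (by omega : d+1 ≤ n),
      ← Finset.sum_Ico_consecutive _ (by omega : 0 ≤ 1) (by omega : 1 ≤ d+1)]
    simp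
  have hrefl : ∑ j ∈ Finset.Ico (d+1) n, Real.cos (2 * π * k * j / n)
      = ∑ j ∈ Finset.Ico 1 (d+1), Real.cos (2 * π * k * j / n) := by
    refine Finset.sum_nbij' (fun j => n - j) (fun j => n - j) ?_ ?_ ?_ ?_ ?_
    · intro a ha; simp only [Finset.mem_Ico] at *; omega
    · intro a ha; simp only [Finset.mem_Ico] at *; omega
    · intro a ha; simp only [Finset.mem_Ico] at ha; show n - (n - a) = a; omega
    · intro a ha; simp only [Finset.mem_Ico] at ha; show n - (n - a) = a; omega
    · intro a ha
      simp only [Finset.mem_Ico] at ha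
      have hcast : ((n - a : ℕ) : ℝ) = (n : ℝ) - a := by
        have : a ≤ n := by omega
        push_cast [Nat.cast_sub this]; ring
      have hne : (n : ℝ) ≠ 0 := by positivity
      have : 2 * π * k * ((n:ℝ) - a) / n = (k : ℕ) * (2 * π) - 2 * π * k * a / n := by
        field_simp
      rw [hcast, this, Real.cos_nat_mul_two_pi_sub]
  rw [hsplit, hrefl, Real.cos_zero] at hT
  push_cast [hn] at hT ⊢
  linarith

private lemma Ssum0 (d k : ℕ) (hk : k = 0) :
    ∑ j ∈ Finset.Ico 1 (d + 1), Real.cos (2 * π * k * j / (2 * d + 1)) = d := by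
  subst hk
  have : ∀ j ∈ Finset.Ico 1 (d+1), Real.cos (2 * π * (0:ℕ) * j / (2 * d + 1)) = 1 := by
    intro j _; norm_num
  rw [Finset.sum_congr rfl this, Finset.sum_const, Nat.card_Ico]
  simp

private lemma rowAx (d i : ℕ) (hd : 1 ≤ d) (hi : i ≤ d) :
    ∑ j ∈ Finset.range (d+1),
      Real.cos (2 * π * i * j / (2 * d + 1)) *
        (if j = 0 then (4 / (2 * d + 1)) * d * (1 - Real.cos (2 * π / (2 * d + 1)))
         else (4 / (2 * d + 1)) * (Real.cos (2 * π / (2 * d + 1)) - Real.cos (2 * π * j / (2 * d + 1))))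
    = if i = 0 then 2 else if i = 1 then 1 - 2 * Real.cos (2 * π / (2 * d + 1))
      else 2 - 2 * Real.cos (2 * π / (2 * d + 1)) := by
  have hn0 : (0:ℝ) < 2 * (d:ℝ) + 1 := by positivity
  have hn' : (2 * (d:ℝ) + 1) ≠ 0 := ne_of_gt hn0
  have hS : ∀ k : ℕ, 1 ≤ k → k ≤ 2 * d →
      ∑ j ∈ Finset.Ico 1 (d + 1), Real.cos (2 * π * k * j / (2 * d + 1)) = -(1/2) := by
    intro k h1 h2
    refine Ssum d k fun hdvd => ?_
    have := Nat.le_of_dvd (by omega) hdvd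
    omega
  rw [Finset.sum_range_succ']
  have hI : ∑ j ∈ Finset.range d,
      Real.cos (2 * π * i * ((j+1 : ℕ) : ℝ) / (2 * d + 1)) *
        (if (j+1 : ℕ) = 0 then (4 / (2 * (d:ℝ) + 1)) * d * (1 - Real.cos (2 * π / (2 * d + 1)))
         else (4 / (2 * d + 1)) * (Real.cos (2 * π / (2 * d + 1)) - Real.cos (2 * π * ((j+1 : ℕ) : ℝ) / (2 * d + 1))))
      = ∑ j ∈ Finset.Ico 1 (d+1),
        Real.cos (2 * π * i * j / (2 * d + 1)) *
          ((4 / (2 * (d:ℝ) + 1)) * (Real.cos (2 * π / (2 * d + 1)) - Real.cos (2 * π * j / (2 * d + 1)))) := by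
    rw [Finset.sum_Ico_eq_sum_range]
    simp only [Nat.add_sub_cancel, Nat.succ_ne_zero, if_false]
    refine Finset.sum_congr rfl fun j _ => ?_
    push_cast
    ring_nf
  rw [hI]
  rcases Nat.eq_zero_or_pos i with hi0 | hi1
  · subst hi0
    have hc : ∀ j ∈ Finset.Ico 1 (d+1),
        Real.cos (2 * π * ((0:ℕ):ℝ) * j / (2 * (d:ℝ) + 1)) *
          ((4 / (2 * (d:ℝ) + 1)) * (Real.cos (2 * π / (2 * (d:ℝ) + 1)) - Real.cos (2 * π * j / (2 * (d:ℝ) + 1))))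
        = (4 / (2 * (d:ℝ) + 1)) * Real.cos (2 * π / (2 * (d:ℝ) + 1))
          - (4 / (2 * (d:ℝ) + 1)) * Real.cos (2 * π * ((1:ℕ):ℝ) * j / (2 * (d:ℝ) + 1)) := by
      intro j _
      norm_num
      ring
    rw [Finset.sum_congr rfl hc, Finset.sum_sub_distrib, Finset.sum_const, Nat.card_Ico,
      ← Finset.mul_sum, hS 1 le_rfl (by omega)]
    simp only [if_pos rfl, Nat.cast_zero, mul_zero, zero_mul, zero_div, Real.cos_zero, one_mul,
      Nat.add_sub_cancel, nsmul_eq_mul]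
    simp only [↓reduceIte]
    field_simp
    ring
  · -- i ≥ 1
    have hkey : ∀ a b : ℝ, Real.cos a * Real.cos b = (Real.cos (a+b) + Real.cos (a-b))/2 := by
      intro a b; rw [Real.cos_add, Real.cos_sub]; ring
    have hexp : ∀ j ∈ Finset.Ico 1 (d+1),
        Real.cos (2 * π * i * j / (2 * (d:ℝ) + 1)) *
          ((4 / (2 * (d:ℝ) + 1)) * (Real.cos (2 * π / (2 * (d:ℝ) + 1)) - Real.cos (2 * π * j / (2 * (d:ℝ) + 1))))
        = (4 / (2 * (d:ℝ) + 1)) * Real.cos (2 * π / (2 * (d:ℝ) + 1)) * Real.cos (2 * π * i * j / (2 * (d:ℝ) + 1))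
          - (2 / (2 * (d:ℝ) + 1)) * Real.cos (2 * π * ((i+1 : ℕ):ℝ) * j / (2 * (d:ℝ) + 1))
          - (2 / (2 * (d:ℝ) + 1)) * Real.cos (2 * π * ((i-1 : ℕ):ℝ) * j / (2 * (d:ℝ) + 1)) := by
      intro j _
      have h1 : 2 * π * (i:ℝ) * j / (2 * (d:ℝ) + 1) + 2 * π * j / (2 * (d:ℝ) + 1)
          = 2 * π * ((i+1 : ℕ):ℝ) * j / (2 * (d:ℝ) + 1) := by
        push_cast; field_simp
      have h2 : 2 * π * (i:ℝ) * j / (2 * (d:ℝ) + 1) - 2 * π * j / (2 * (d:ℝ) + 1)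
          = 2 * π * ((i-1 : ℕ):ℝ) * j / (2 * (d:ℝ) + 1) := by
        push_cast [Nat.cast_sub hi1]; field_simp
      rw [show Real.cos (2 * π * (i:ℝ) * j / (2 * (d:ℝ) + 1)) *
          ((4 / (2 * (d:ℝ) + 1)) * (Real.cos (2 * π / (2 * (d:ℝ) + 1)) - Real.cos (2 * π * j / (2 * (d:ℝ) + 1))))
          = (4 / (2 * (d:ℝ) + 1)) * Real.cos (2 * π / (2 * (d:ℝ) + 1)) * Real.cos (2 * π * i * j / (2 * (d:ℝ) + 1))
            - (4 / (2 * (d:ℝ) + 1)) * (Real.cos (2 * π * (i:ℝ) * j / (2 * (d:ℝ) + 1)) * Real.cos (2 * π * j / (2 * (d:ℝ) + 1))) from by ring,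
        hkey, h1, h2]
      ring
    rw [Finset.sum_congr rfl hexp, Finset.sum_sub_distrib, Finset.sum_sub_distrib,
      ← Finset.mul_sum, ← Finset.mul_sum, ← Finset.mul_sum,
      hS i hi1 (by omega), hS (i+1) (by omega) (by omega)]
    rcases eq_or_lt_of_le (show 1 ≤ i from hi1) with hi1' | hi2
    · -- i = 1
      rw [Ssum0 d (i-1) (by omega)]
      simp only [if_pos rfl, Nat.cast_zero, mul_zero, zero_mul, zero_div, Real.cos_zero, one_mul,
        if_neg (by omega : ¬ i = 0), if_pos hi1'.symm]
      push_cast [← hi1']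
      field_simp
      ring
    · rw [hS (i-1) (by omega) (by omega)]
      simp only [if_pos rfl, Nat.cast_zero, mul_zero, zero_mul, zero_div, Real.cos_zero, one_mul,
        if_neg (by omega : ¬ i = 0), if_neg (by omega : ¬ i = 1)]
      simp only [↓reduceIte]
      field_simp
      ring

theorem stmt9 (n : ℕ) (hn : 3 ≤ n) (hodd : Odd n) (d : ℕ) (hd : d = (n - 1) / 2)
    (A : Matrix (Fin (d + 1)) (Fin (d + 1)) ℝ)
    (hA : ∀ i j : Fin (d + 1), A i j = Real.cos (2 * Real.pi * i.val * j.val / n))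
    (b : Fin (d + 1) → ℝ)
    (hb : ∀ i : Fin (d + 1), b i =
      if i.val = 0 then 2
      else if i.val = 1 then 1 - 2 * Real.cos (2 * Real.pi / n)
      else 2 - 2 * Real.cos (2 * Real.pi / n))
    (x : Fin (d + 1) → ℝ)
    (hx : ∀ i : Fin (d + 1), x i =
      if i.val = 0 then (4 / n) * d * (1 - Real.cos (2 * Real.pi / n))
      else (4 / n) * (Real.cos (2 * Real.pi / n) - Real.cos (2 * Real.pi * i.val / n))) :
    A.mulVec x = b ∧ ∀ i, 0 ≤ x i := by
  obtain ⟨m, rfl⟩ := hodd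
  have hdm : d = m := by omega
  subst hdm
  have hd1 : 1 ≤ d := by omega
  have hncast : ((2 * d + 1 : ℕ) : ℝ) = 2 * (d:ℝ) + 1 := by push_cast; ring
  have hn0 : (0:ℝ) < 2 * (d:ℝ) + 1 := by positivity
  constructor
  · funext i
    have hi : i.val ≤ d := by omega
    have hmv : A.mulVec x i = ∑ j : Fin (d+1), A i j * x j := rfl
    rw [hmv]
    have hconv : ∑ j : Fin (d+1), A i j * x j
        = ∑ j ∈ Finset.range (d+1),
          Real.cos (2 * π * i.val * j / (2 * (d:ℝ) + 1)) *
            (if j = 0 then (4 / (2 * (d:ℝ) + 1)) * d * (1 - Real.cos (2 * π / (2 * (d:ℝ) + 1)))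
             else (4 / (2 * (d:ℝ) + 1)) * (Real.cos (2 * π / (2 * (d:ℝ) + 1)) - Real.cos (2 * π * j / (2 * (d:ℝ) + 1)))) := by
      rw [← Fin.sum_univ_eq_sum_range]
      refine Finset.sum_congr rfl fun j _ => ?_
      rw [hA, hx, hncast]
    rw [hconv, rowAx d i.val hd1 hi, hb]
    rcases Nat.eq_zero_or_pos i.val with h0 | h1
    · simp [h0]
    rcases eq_or_lt_of_le (show 1 ≤ i.val from h1) with h1' | h2
    · simp [← h1', hncast, h1'.symm]
    · rw [if_neg (by omega), if_neg (by omega), if_neg (by omega), if_neg (by omega), hncast]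
  · intro i
    rw [hx]
    have hi : i.val ≤ d := by omega
    have hc1 : Real.cos (2 * π / ((2*d+1 : ℕ) : ℝ)) ≤ 1 := Real.cos_le_one _
    have hpos : (0:ℝ) < ((2*d+1 : ℕ):ℝ) := by rw [hncast]; positivity
    rcases Nat.eq_zero_or_pos i.val with h0 | h1
    · rw [if_pos h0]
      have h4 : (0:ℝ) ≤ 4 / ((2*d+1 : ℕ):ℝ) * d := by positivity
      nlinarith
    · rw [if_neg (by omega)]
      have hπ := Real.pi_pos
      have hile : (i.val : ℝ) ≤ d := by exact_mod_cast hi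
      have h1' : (1:ℝ) ≤ (i.val : ℝ) := by exact_mod_cast h1
      have hle : Real.cos (2 * π * i.val / ((2*d+1 : ℕ):ℝ)) ≤ Real.cos (2 * π / ((2*d+1 : ℕ):ℝ)) := by
        apply Real.cos_le_cos_of_nonneg_of_le_pi
        · positivity
        · rw [hncast, div_le_iff₀ hn0]
          nlinarith
        · rw [hncast, div_le_div_iff₀ hn0 hn0]
          nlinarith [mul_nonneg (mul_nonneg (by linarith : (0:ℝ) ≤ 2*π) hn0.le)
            (by linarith : (0:ℝ) ≤ (i.val:ℝ) - 1)]
      have h4 : (0:ℝ) < 4 / ((2*d+1:ℕ):ℝ) := by positivity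
      nlinarith
end

section
/- Let n ≥ 4 be even and d = n/2. Define A_{ij} = cos(2πij/n) for i,j = 0,...,d and b = (2, 1 - 2cos(2π/n), 2 - 2cos(2π/n), ..., 2 - 2cos(2π/n))^T. Then the vector x with x_0 = (4/n)·((n-1)/2)·(1 - cos(2π/n)), x_i = (4/n)(cos(2π/n) - cos(2πi/n)) for 1 ≤ i ≤ d-1, and x_d = (2/n)(cos(2π/n) - cos(2πd/n)) satisfies Ax = b and x ≥ 0. -/
open Finset Real

noncomputable def gfun (n k j : ℕ) : ℝ :=
  (2 / n) * (Real.cos (2 * Real.pi * k * j / n) *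
    (Real.cos (2 * Real.pi / n) - Real.cos (2 * Real.pi * j / n)))

lemma sum_cos_eq_zero (n k : ℕ) (hk0 : 0 < k) (hkn : k < n) :
    ∑ j ∈ Finset.range n, Real.cos (2 * Real.pi * k * j / n) = 0 := by
  have hn : 0 < n := hk0.trans hkn
  have hnR : (n : ℝ) ≠ 0 := Nat.cast_ne_zero.mpr hn.ne'
  set θ : ℝ := 2 * Real.pi * k / n with hθ
  set z : ℂ := Complex.exp (θ * Complex.I) with hz
  have hterm : ∀ j : ℕ, Real.cos (2 * Real.pi * k * j / n) = (z ^ j).re := by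
    intro j
    rw [hz, ← Complex.exp_nat_mul]
    have : (j : ℂ) * (↑θ * Complex.I) = (↑(θ * j) : ℝ) * Complex.I := by
      push_cast; ring
    rw [this, Complex.exp_ofReal_mul_I_re]
    congr 1
    rw [hθ]; ring
  have hz1 : z ≠ 1 := by
    intro h
    rw [hz, Complex.exp_eq_one_iff] at h
    obtain ⟨m, hm⟩ := h
    have hre : θ = (m : ℝ) * (2 * Real.pi) := by
      have := congrArg Complex.im hm
      simpa using this
    have hpi : (0:ℝ) < 2 * Real.pi := by positivity
    have hkm : (k : ℝ) = m * n := by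
      rw [hθ] at hre
      field_simp at hre
      nlinarith [Real.pi_ne_zero, Real.pi_pos]
    rcases le_or_gt m 0 with hm0 | hm0
    · have : (m : ℝ) * n ≤ 0 := mul_nonpos_of_nonpos_of_nonneg (by exact_mod_cast hm0) (by positivity)
      have : (0:ℝ) < k := by exact_mod_cast hk0
      linarith
    · have h1m : (1:ℝ) ≤ m := by exact_mod_cast hm0
      have : (n:ℝ) ≤ (m:ℝ) * n := le_mul_of_one_le_left (by positivity) h1m
      have : (k:ℝ) < (n:ℝ) := by exact_mod_cast hkn
      linarith [hkm]
  have hzn : z ^ n = 1 := by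
    rw [hz, ← Complex.exp_nat_mul]
    have hθn : (θ * n : ℝ) = 2 * Real.pi * k := by rw [hθ]; field_simp
    have : (n : ℂ) * (↑θ * Complex.I) = (k : ℂ) * (2 * Real.pi * Complex.I) := by
      calc (n : ℂ) * (↑θ * Complex.I) = ((θ * n : ℝ) : ℂ) * Complex.I := by push_cast; ring
        _ = (k : ℂ) * (2 * Real.pi * Complex.I) := by rw [hθn]; push_cast; ring
    rw [this]
    exact_mod_cast Complex.exp_int_mul_two_pi_mul_I k
  calc ∑ j ∈ Finset.range n, Real.cos (2 * Real.pi * k * j / n)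
      = (∑ j ∈ Finset.range n, z ^ j).re := by
        rw [Complex.re_sum]; exact Finset.sum_congr rfl fun j _ => hterm j
    _ = 0 := by rw [geom_sum_eq hz1, hzn]; simp

lemma cos_refl (n : ℕ) (hn : (n:ℝ) ≠ 0) (k : ℕ) (a b : ℝ) (hab : a + b = n) :
    Real.cos (2 * Real.pi * k * a / n) = Real.cos (2 * Real.pi * k * b / n) := by
  have h : 2 * Real.pi * k * a / n = k * (2 * Real.pi) - 2 * Real.pi * k * b / n := by
    field_simp
    linear_combination (k:ℝ) * hab
  rw [h, Real.cos_nat_mul_two_pi_sub]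

lemma gfun_sym (n d k : ℕ) (hnd : n = d + d) (hn : (n:ℝ) ≠ 0) (j : ℕ) (hj : j ≤ d) :
    gfun n k (d + j) = gfun n k (d - j) := by
  have hab : ((d + j : ℕ) : ℝ) + ((d - j : ℕ) : ℝ) = n := by
    rw [Nat.cast_add, Nat.cast_sub hj, hnd]
    push_cast; ring
  unfold gfun
  rw [cos_refl n hn k _ _ hab]
  congr 2
  rw [show 2 * Real.pi * ((d + j : ℕ) : ℝ) / n = 2 * Real.pi * (1:ℕ) * ((d + j : ℕ) : ℝ) / n by
    push_cast; ring,
    cos_refl n hn 1 _ _ hab]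
  push_cast; ring_nf

lemma gfun_reflect (n d k : ℕ) (hnd : n = d + d) (hn : (n:ℝ) ≠ 0) :
    ∑ j ∈ Finset.range n, gfun n k j =
      2 * (∑ j ∈ Finset.range d, gfun n k j) + gfun n k d - gfun n k 0 := by
  rw [show Finset.range n = Finset.range (d + d) from by rw [hnd], Finset.sum_range_add]
  have h1 : ∑ j ∈ Finset.range d, gfun n k (d + j) = ∑ j ∈ Finset.range d, gfun n k (d - j) :=
    Finset.sum_congr rfl fun j hj => gfun_sym n d k hnd hn j (le_of_lt (Finset.mem_range.mp hj))
  have h2 : ∑ j ∈ Finset.range d, gfun n k (d - j) = ∑ j ∈ Finset.range d, gfun n k (j + 1) := by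
    rw [← Finset.sum_range_reflect (fun j => gfun n k (j + 1)) d]
    refine Finset.sum_congr rfl fun j hj => ?_
    have := Finset.mem_range.mp hj
    congr 1
    omega
  have h3 : ∑ j ∈ Finset.range d, gfun n k (j + 1)
      = (∑ j ∈ Finset.range d, gfun n k j) + gfun n k d - gfun n k 0 := by
    have := Finset.sum_range_succ' (gfun n k) d
    have h4 := Finset.sum_range_succ (gfun n k) d
    linarith [this, h4]
  rw [h1, h2, h3]; ring

lemma gfun_total0 (n : ℕ) (hn : 1 < n) :
    ∑ j ∈ Finset.range n, gfun n 0 j = 2 * Real.cos (2 * Real.pi / n) := by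
  have hnR : (n : ℝ) ≠ 0 := Nat.cast_ne_zero.mpr (by omega)
  have hterm : ∀ j : ℕ, gfun n 0 j
      = (2 / n) * Real.cos (2 * Real.pi / n) - (2 / n) * Real.cos (2 * Real.pi * (1:ℕ) * j / n) := by
    intro j
    unfold gfun
    push_cast
    rw [show 2 * Real.pi * 0 * (j:ℝ) / n = 0 by ring, Real.cos_zero]
    ring
  rw [Finset.sum_congr rfl fun j _ => hterm j, Finset.sum_sub_distrib, ← Finset.mul_sum,
    ← Finset.mul_sum, Finset.sum_const, sum_cos_eq_zero n 1 one_pos hn]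
  simp
  field_simp

lemma gfun_total (n d k : ℕ) (hnd : n = d + d) (hd2 : 2 ≤ d) (hk1 : 1 ≤ k) (hkd : k ≤ d) :
    ∑ j ∈ Finset.range n, gfun n k j = if k = 1 then -1 else 0 := by
  have hnR : (n : ℝ) ≠ 0 := Nat.cast_ne_zero.mpr (by omega)
  obtain ⟨m, rfl⟩ : ∃ m, k = m + 1 := ⟨k - 1, by omega⟩
  have hterm : ∀ j : ℕ, gfun n (m + 1) j
      = (2 * Real.cos (2 * Real.pi / n) / n) * Real.cos (2 * Real.pi * (m+1) * j / n)
        - (1 / n) * Real.cos (2 * Real.pi * m * j / n)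
        - (1 / n) * Real.cos (2 * Real.pi * (m + 2) * j / n) := by
    intro j
    have hprod : Real.cos (2 * Real.pi * ((m:ℝ) + 1) * j / n) * Real.cos (2 * Real.pi * j / n)
        = (Real.cos (2 * Real.pi * (m:ℝ) * j / n) + Real.cos (2 * Real.pi * ((m:ℝ) + 2) * j / n)) / 2 := by
      have h1 : 2 * Real.pi * (m:ℝ) * j / n = 2 * Real.pi * ((m:ℝ)+1) * j / n - 2 * Real.pi * j / n := by ring
      have h2 : 2 * Real.pi * ((m:ℝ)+2) * j / n = 2 * Real.pi * ((m:ℝ)+1) * j / n + 2 * Real.pi * j / n := by ring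
      rw [h1, h2, Real.cos_sub, Real.cos_add]; ring
    unfold gfun
    push_cast
    linear_combination (-2 / (n:ℝ)) * hprod
  rw [Finset.sum_congr rfl fun j _ => hterm j, Finset.sum_sub_distrib, Finset.sum_sub_distrib,
    ← Finset.mul_sum, ← Finset.mul_sum, ← Finset.mul_sum]
  have hS1 : ∑ j ∈ Finset.range n, Real.cos (2 * Real.pi * (m+1) * j / n) = 0 := by
    have := sum_cos_eq_zero n (m+1) (by omega) (by omega)
    convert this using 2 with j
    push_cast; ring_nf
  have hS3 : ∑ j ∈ Finset.range n, Real.cos (2 * Real.pi * (m+2) * j / n) = 0 := by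
    have := sum_cos_eq_zero n (m+2) (by omega) (by omega)
    convert this using 2 with j
    push_cast; ring_nf
  rcases Nat.eq_zero_or_pos m with rfl | hm
  · have hS0 : ∑ j ∈ Finset.range n, Real.cos (2 * Real.pi * (0:ℕ) * j / n) = n := by
      have : ∀ j : ℕ, Real.cos (2 * Real.pi * (0:ℕ) * j / n) = 1 := by
        intro j
        rw [show 2 * Real.pi * ((0:ℕ):ℝ) * j / n = 0 by push_cast; ring, Real.cos_zero]
      rw [Finset.sum_congr rfl fun j _ => this j, Finset.sum_const]
      simp
    rw [hS0, hS1, hS3]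
    norm_num
    field_simp
  · have hSm : ∑ j ∈ Finset.range n, Real.cos (2 * Real.pi * m * j / n) = 0 :=
      sum_cos_eq_zero n m (by omega) (by omega)
    rw [hSm, hS1, hS3]
    have hne : m + 1 ≠ 1 := by omega
    rw [if_neg hne]
    ring

theorem stmt10 (n : ℕ) (hn : 4 ≤ n) (heven : Even n) (d : ℕ) (hd : d = n / 2)
    (A : Matrix (Fin (d + 1)) (Fin (d + 1)) ℝ)
    (hA : ∀ i j : Fin (d + 1), A i j = Real.cos (2 * Real.pi * i.val * j.val / n))
    (b : Fin (d + 1) → ℝ)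
    (hb : ∀ i : Fin (d + 1), b i =
      if i.val = 0 then 2
      else if i.val = 1 then 1 - 2 * Real.cos (2 * Real.pi / n)
      else 2 - 2 * Real.cos (2 * Real.pi / n))
    (x : Fin (d + 1) → ℝ)
    (hx : ∀ i : Fin (d + 1), x i =
      if i.val = 0 then (4 / n) * ((n - 1 : ℝ) / 2) * (1 - Real.cos (2 * Real.pi / n))
      else if i.val = d then (2 / n) * (Real.cos (2 * Real.pi / n) - Real.cos (2 * Real.pi * d / n))
      else (4 / n) * (Real.cos (2 * Real.pi / n) - Real.cos (2 * Real.pi * i.val / n))) :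
    A.mulVec x = b ∧ ∀ i, 0 ≤ x i := by
  obtain ⟨r, hr⟩ := heven
  have hnd : n = d + d := by omega
  have hd2 : 2 ≤ d := by omega
  have hnR : (n : ℝ) ≠ 0 := Nat.cast_ne_zero.mpr (by omega)
  constructor
  · funext i
    set k := (i : ℕ) with hk
    have hkd : k ≤ d := Nat.lt_succ_iff.mp i.isLt
    set F : ℕ → ℝ := fun j => Real.cos (2 * Real.pi * k * j / n) *
      (if j = 0 then (4 / n) * ((n - 1 : ℝ) / 2) * (1 - Real.cos (2 * Real.pi / n))
       else if j = d then (2 / n) * (Real.cos (2 * Real.pi / n) - Real.cos (2 * Real.pi * d / n))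
       else (4 / n) * (Real.cos (2 * Real.pi / n) - Real.cos (2 * Real.pi * j / n))) with hF
    have hmv : A.mulVec x i = ∑ j ∈ Finset.range (d + 1), F j := by
      rw [← Fin.sum_univ_eq_sum_range F (d + 1)]
      rw [Matrix.mulVec, dotProduct]
      refine Finset.sum_congr rfl fun j _ => ?_
      simp only [hF]
      rw [hA, hx]
    have hF0 : F 0 = (4 / n) * ((n - 1 : ℝ) / 2) * (1 - Real.cos (2 * Real.pi / n)) := by
      simp only [hF]
      simp
    have hFd : F d = gfun n k d := by
      have hd0 : ¬ (d = 0) := by omega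
      simp only [hF, if_neg hd0, eq_self_iff_true, if_true]
      unfold gfun
      ring
    have hFmid : ∀ j ∈ Finset.Ico 1 d, F j = 2 * gfun n k j := by
      intro j hj
      obtain ⟨h1, h2⟩ := Finset.mem_Ico.mp hj
      have e0 : ¬ (j = 0) := by omega
      have ed : ¬ (j = d) := by omega
      simp only [hF, if_neg e0, if_neg ed]
      unfold gfun
      ring
    have hsplit : ∑ j ∈ Finset.range (d + 1), F j
        = F 0 + (∑ j ∈ Finset.Ico 1 d, F j) + F d := by
      rw [Finset.sum_range_succ, Finset.range_eq_Ico,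
        Finset.sum_eq_sum_Ico_succ_bot (by omega : 0 < d)]
    have hIg : ∑ j ∈ Finset.Ico 1 d, gfun n k j
        = (∑ j ∈ Finset.range d, gfun n k j) - gfun n k 0 := by
      rw [Finset.range_eq_Ico, Finset.sum_eq_sum_Ico_succ_bot (by omega : 0 < d)]
      ring
    have hmid : ∑ j ∈ Finset.Ico 1 d, F j = 2 * ∑ j ∈ Finset.Ico 1 d, gfun n k j := by
      rw [Finset.mul_sum]
      exact Finset.sum_congr rfl hFmid
    have hrefl := gfun_reflect n d k hnd hnR
    have hg0 : gfun n k 0 = (2 / n) * (Real.cos (2 * Real.pi / n) - 1) := by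
      unfold gfun
      rw [show 2 * Real.pi * (k:ℝ) * ((0:ℕ):ℝ) / n = 0 by push_cast; ring,
        show 2 * Real.pi * ((0:ℕ):ℝ) / n = 0 by push_cast; ring, Real.cos_zero]
      ring
    have hmain : A.mulVec x i
        = (4 / n) * ((n - 1 : ℝ) / 2) * (1 - Real.cos (2 * Real.pi / n))
          + (∑ j ∈ Finset.range n, gfun n k j) - gfun n k 0 := by
      rw [hmv, hsplit, hmid, hIg, hF0, hFd]
      linarith [hrefl]
    have hn1R : (1:ℝ) ≤ (n:ℝ) := by exact_mod_cast (by omega : 1 ≤ n)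
    rcases Nat.eq_zero_or_pos k with hk0 | hkpos
    · have h0 : (i : ℕ) = 0 := hk0
      rw [hmain, hg0, hk0, gfun_total0 n (by omega), hb, if_pos h0]
      field_simp
      ring
    · rw [hmain, hg0, gfun_total n d k hnd hd2 hkpos hkd, hb]
      rcases eq_or_ne k 1 with hk1 | hk1
      · rw [if_pos hk1]
        have h0 : ¬ ((i:ℕ) = 0) := by omega
        have h1 : (i:ℕ) = 1 := hk1
        rw [if_neg h0, if_pos h1]
        field_simp
        ring
      · rw [if_neg hk1]
        have h0 : ¬ ((i:ℕ) = 0) := by omega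
        have h1 : ¬ ((i:ℕ) = 1) := hk1
        rw [if_neg h0, if_neg h1]
        field_simp
        ring
  · intro i
    rw [hx i]
    have hnpos : (0:ℝ) < n := by positivity
    have hc1 : Real.cos (2 * Real.pi / n) ≤ 1 := Real.cos_le_one _
    have hkey : ∀ j : ℕ, 1 ≤ j → j ≤ d →
        Real.cos (2 * Real.pi * j / n) ≤ Real.cos (2 * Real.pi / n) := by
      intro j h1 h2
      apply Real.cos_le_cos_of_nonneg_of_le_pi
      · positivity
      · rw [div_le_iff₀ hnpos]
        have hj2 : (2 * j : ℝ) ≤ n := by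
          have : 2 * j ≤ n := by omega
          exact_mod_cast this
        nlinarith [Real.pi_pos]
      · rw [div_le_div_iff_of_pos_right hnpos]
        have : (1:ℝ) ≤ (j:ℝ) := by exact_mod_cast h1
        nlinarith [Real.pi_pos]
    rcases eq_or_ne (i : ℕ) 0 with h0 | h0
    · rw [if_pos h0]
      have h4 : (4:ℝ) ≤ n := by exact_mod_cast hn
      have : (0:ℝ) ≤ (n - 1 : ℝ) / 2 := by linarith
      have h1 : (0:ℝ) ≤ 1 - Real.cos (2 * Real.pi / n) := by linarith
      positivity
    · rw [if_neg h0]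
      rcases eq_or_ne (i : ℕ) d with hdd | hdd
      · rw [if_pos hdd]
        have := hkey d (by omega) le_rfl
        have h2 : (0:ℝ) ≤ 2 / n := by positivity
        nlinarith
      · rw [if_neg hdd]
        have hid : (i:ℕ) ≤ d := Nat.lt_succ_iff.mp i.isLt
        have := hkey (i:ℕ) (by omega) hid
        have h2 : (0:ℝ) ≤ 4 / n := by positivity
        nlinarith
end

section
/- Suppose symmetric n×n matrices X^(1),...,X^(d) (d = ⌊n/2⌋) satisfy: X^(k) ≥ 0 entrywise, Σ_{k=1}^d X^(k) = J - I, and I + Σ_{k=1}^d cos(2πik/n) X^(k) ⪰ 0 for i = 1,...,d. Then 2I - X^(1) + (2 - 2cos(2π/n))(J - I) ⪰ 0. -/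
open Finset Matrix

-- PSD helpers
lemma psdAdd {n : ℕ} {A B : Matrix (Fin n) (Fin n) ℝ} (hA : A.PosSemidef) (hB : B.PosSemidef) :
    (A + B).PosSemidef := by
  refine PosSemidef.of_dotProduct_mulVec_nonneg (hA.1.add hB.1) fun x => ?_
  simpa [Matrix.add_mulVec, dotProduct_add] using add_nonneg (hA.dotProduct_mulVec_nonneg x) (hB.dotProduct_mulVec_nonneg x)

lemma psdSmul {n : ℕ} {A : Matrix (Fin n) (Fin n) ℝ} (hA : A.PosSemidef) {c : ℝ} (hc : 0 ≤ c) :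
    (c • A).PosSemidef := by
  refine PosSemidef.of_dotProduct_mulVec_nonneg ?_ fun x => ?_
  · rw [Matrix.IsHermitian, Matrix.conjTranspose_smul]
    simp only [star_trivial]
    rw [show Aᴴ = A from hA.1.eq]
  · rw [Matrix.smul_mulVec, dotProduct_smul]
    exact mul_nonneg hc (hA.dotProduct_mulVec_nonneg x)

lemma psdSum {n : ℕ} {ι : Type*} (s : Finset ι) (f : ι → Matrix (Fin n) (Fin n) ℝ)
    (h : ∀ i ∈ s, (f i).PosSemidef) : (∑ i ∈ s, f i).PosSemidef :=
  Finset.sum_induction f _ (fun _ _ ha hb => psdAdd ha hb) Matrix.PosSemidef.zero h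

lemma psdJ {n : ℕ} : (Matrix.of (fun _ _ => (1:ℝ)) : Matrix (Fin n) (Fin n) ℝ).PosSemidef := by
  refine PosSemidef.of_dotProduct_mulVec_nonneg ?_ fun x => ?_
  · ext i j; simp [Matrix.conjTranspose_apply]
  · have h : (Matrix.of (fun _ _ => (1:ℝ)) : Matrix (Fin n) (Fin n) ℝ) *ᵥ x
        = fun _ => ∑ j, x j := by
      ext i; simp [Matrix.mulVec, dotProduct]
    rw [h]
    simp only [dotProduct, star_trivial]
    rw [← Finset.sum_mul]
    exact mul_self_nonneg _

open Finset Matrix Real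

lemma sumCosRange (n m : ℕ) (h0 : 0 < m) (h1 : m < n) :
    ∑ i ∈ Finset.range n, Real.cos (2 * Real.pi * m * i / n) = 0 := by
  have hnn : 0 < n := by omega
  have hn0 : (0:ℝ) < n := by exact_mod_cast hnn
  set ζ : ℂ := Complex.exp ((2 * Real.pi * m / n : ℝ) * Complex.I) with hζdef
  have hpow : ∀ i : ℕ, ζ ^ i = Complex.exp ((2 * Real.pi * m * i / n : ℝ) * Complex.I) := by
    intro i
    rw [hζdef, ← Complex.exp_nat_mul]
    congr 1
    push_cast
    ring
  have hζn : ζ ^ n = 1 := by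
    rw [hpow]
    have h2 : (2 * Real.pi * m * n / n : ℝ) = (m : ℝ) * (2 * Real.pi) := by
      field_simp
    rw [h2]
    push_cast
    have := Complex.exp_int_mul_two_pi_mul_I (m : ℤ)
    push_cast at this
    rw [← this]
    congr 1
    ring
  have hζ1 : ζ ≠ 1 := by
    intro h
    have hre : Real.cos (2 * Real.pi * m / n) = 1 := by
      have := congrArg Complex.re h
      rwa [hζdef, Complex.exp_ofReal_mul_I_re] at this
    have harg0 : (0:ℝ) < 2 * Real.pi * m / n := by
      have := Real.pi_pos; positivity
    have harg2 : 2 * Real.pi * m / n < 2 * Real.pi := by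
      rw [div_lt_iff₀ hn0]
      have := Real.pi_pos
      have : (m:ℝ) < n := by exact_mod_cast h1
      nlinarith [Real.pi_pos]
    rw [Real.cos_eq_one_iff_of_lt_of_lt (by linarith) harg2] at hre
    linarith
  have hsum := geom_sum_eq hζ1 n
  rw [hζn, sub_self, zero_div] at hsum
  have : ∑ i ∈ Finset.range n, Real.cos (2 * Real.pi * m * i / n)
      = (∑ i ∈ Finset.range n, ζ ^ i).re := by
    rw [Complex.re_sum]
    refine Finset.sum_congr rfl fun i _ => ?_
    rw [hpow i, Complex.exp_ofReal_mul_I_re]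
  rw [this, hsum]
  simp

lemma sumCosIcc (n m : ℕ) (h0 : 0 < m) (h1 : m < n) :
    ∑ i ∈ Finset.Icc 1 (n-1), Real.cos (2 * Real.pi * m * i / n) = -1 := by
  have hr : Finset.range n = insert 0 (Finset.Icc 1 (n-1)) := by
    ext i; simp [Finset.mem_Icc, Finset.mem_range]; omega
  have h := sumCosRange n m h0 h1
  rw [hr, Finset.sum_insert (by simp)] at h
  simp only [Nat.cast_zero, mul_zero, zero_div, Real.cos_zero] at h
  linarith

lemma cosIccOne (n : ℕ) (hn : 3 ≤ n) :
    ∑ i ∈ Finset.Icc 1 (n-1), Real.cos (2 * Real.pi * i / n) = -1 := by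
  have h := sumCosIcc n 1 one_pos (by omega)
  rw [← h]
  exact Finset.sum_congr rfl fun i _ => by norm_num

lemma cardIcc (n : ℕ) (hn : 3 ≤ n) : ((Finset.Icc 1 (n-1)).card : ℝ) = (n:ℝ) - 1 := by
  rw [Nat.card_Icc]
  have : n - 1 + 1 - 1 = n - 1 := by omega
  rw [this]
  push_cast [Nat.cast_sub (by omega : 1 ≤ n)]
  ring

lemma coefA (n : ℕ) (hn : 3 ≤ n) :
    (2 - 2*Real.cos (2*Real.pi/n)) * ((n:ℝ)-1)/n
      + ∑ i ∈ Finset.Icc 1 (n-1),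
          (2*Real.cos (2*Real.pi/n) - 2*Real.cos (2*Real.pi*i/n))/n = 2 := by
  have hn0 : (n:ℝ) ≠ 0 := by positivity
  rw [← Finset.sum_div, Finset.sum_sub_distrib, Finset.sum_const, ← Finset.mul_sum,
    cosIccOne n hn, nsmul_eq_mul, cardIcc n hn]
  field_simp
  ring

lemma coefB (n : ℕ) (hn : 3 ≤ n) (d : ℕ) (hd : d = n / 2) (k : ℕ)
    (hk1 : 1 ≤ k) (hkd : k ≤ d) :
    (2 - 2*Real.cos (2*Real.pi/n)) * ((n:ℝ)-1)/n
      + ∑ i ∈ Finset.Icc 1 (n-1),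
          (2*Real.cos (2*Real.pi/n) - 2*Real.cos (2*Real.pi*i/n))/n
            * Real.cos (2*Real.pi*i*k/n)
    = (2 - 2*Real.cos (2*Real.pi/n)) - (if k = 1 then 1 else 0) := by
  have hn0 : (n:ℝ) ≠ 0 := by positivity
  have hkn : k < n := by omega
  have hk1n : k + 1 < n := by omega
  have hterm : ∀ i : ℕ,
      (2*Real.cos (2*Real.pi/n) - 2*Real.cos (2*Real.pi*i/n))/n
          * Real.cos (2*Real.pi*i*k/n)
      = (2*Real.cos (2*Real.pi/n) * Real.cos (2*Real.pi*k*i/n)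
          - Real.cos (2*Real.pi*((k:ℝ)+1)*i/n) - Real.cos (2*Real.pi*((k:ℝ)-1)*i/n))/n := by
    intro i
    have e0 : (2*Real.pi*k*i/n : ℝ) = 2*Real.pi*i*k/n := by ring
    have e1 : (2*Real.pi*((k:ℝ)+1)*i/n : ℝ)
        = 2*Real.pi*i*k/n + 2*Real.pi*i/n := by ring
    have e2 : (2*Real.pi*((k:ℝ)-1)*i/n : ℝ)
        = 2*Real.pi*i*k/n - 2*Real.pi*i/n := by ring
    rw [e0, e1, e2, Real.cos_add, Real.cos_sub]
    ring
  rw [Finset.sum_congr rfl fun i _ => hterm i]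
  rw [← Finset.sum_div, Finset.sum_sub_distrib, Finset.sum_sub_distrib, ← Finset.mul_sum]
  have hSk : ∑ i ∈ Finset.Icc 1 (n-1), Real.cos (2*Real.pi*k*i/n) = -1 :=
    sumCosIcc n k (by omega) hkn
  have hSk1 : ∑ i ∈ Finset.Icc 1 (n-1), Real.cos (2*Real.pi*((k:ℝ)+1)*i/n) = -1 := by
    have h := sumCosIcc n (k+1) (by omega) hk1n
    rw [← h]
    refine Finset.sum_congr rfl fun i _ => ?_
    congr 1
    push_cast
    ring
  rw [hSk, hSk1]
  by_cases hk : k = 1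
  · subst hk
    simp only [Nat.cast_one, sub_self, mul_zero, zero_mul, zero_div, Real.cos_zero,
      Finset.sum_const, nsmul_eq_mul, if_pos rfl]
    rw [cardIcc n hn]
    field_simp
    rw [if_pos trivial]
    ring
  · have hSm : ∑ i ∈ Finset.Icc 1 (n-1), Real.cos (2*Real.pi*((k:ℝ)-1)*i/n) = -1 := by
      have h := sumCosIcc n (k-1) (by omega) (by omega)
      rw [← h]
      refine Finset.sum_congr rfl fun i _ => ?_
      congr 1
      push_cast [Nat.cast_sub hk1]
      ring
    rw [hSm, if_neg hk]
    field_simp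
    ring

theorem stmt12 (n : ℕ) (hn : 3 ≤ n) (d : ℕ) (hd : d = n / 2)
    (X : ℕ → Matrix (Fin n) (Fin n) ℝ)
    (hsym : ∀ k ∈ Finset.Icc 1 d, (X k).IsSymm)
    (hnonneg : ∀ k ∈ Finset.Icc 1 d, ∀ i j, 0 ≤ X k i j)
    (hsum : ∑ k ∈ Finset.Icc 1 d, X k =
      Matrix.of (fun _ _ => (1 : ℝ)) - (1 : Matrix (Fin n) (Fin n) ℝ))
    (hlmi : ∀ i ∈ Finset.Icc 1 d,
      Matrix.PosSemidef
        ((1 : Matrix (Fin n) (Fin n) ℝ) +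
          ∑ k ∈ Finset.Icc 1 d, Real.cos (2 * Real.pi * i * k / n) • X k)) :
    Matrix.PosSemidef
      ((2 : ℝ) • (1 : Matrix (Fin n) (Fin n) ℝ) - X 1 +
        (2 - 2 * Real.cos (2 * Real.pi / n)) •
          (Matrix.of (fun _ _ => (1 : ℝ)) - (1 : Matrix (Fin n) (Fin n) ℝ))) := by
  have hπ := Real.pi_pos
  have hn0 : (0:ℝ) < n := by exact_mod_cast (by omega : 0 < n)
  have h1d : 1 ≤ d := by omega
  have h1F : (1:ℕ) ∈ Finset.Icc 1 d := Finset.mem_Icc.mpr ⟨le_refl 1, h1d⟩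
  set x0 : ℝ := (2 - 2*Real.cos (2*Real.pi/n)) * ((n:ℝ)-1)/n with hx0def
  set w : ℕ → ℝ := fun i => (2*Real.cos (2*Real.pi/n) - 2*Real.cos (2*Real.pi*i/n))/n
    with hwdef
  -- nonnegativity of coefficients
  have hx0 : 0 ≤ x0 := by
    have h1 := Real.cos_le_one (2*Real.pi/n)
    have h2 : (1:ℝ) ≤ n := by exact_mod_cast (by omega : 1 ≤ n)
    apply div_nonneg (mul_nonneg (by linarith) (by linarith)) (le_of_lt hn0)
  have hw : ∀ i ∈ Finset.Icc 1 (n-1), 0 ≤ w i := by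
    intro i hi
    rw [Finset.mem_Icc] at hi
    have hi1 : (1:ℝ) ≤ i := by exact_mod_cast hi.1
    have hi2 : (i:ℝ) ≤ (n:ℝ) - 1 := by
      have : (i:ℝ) ≤ ((n-1:ℕ):ℝ) := by exact_mod_cast hi.2
      rwa [Nat.cast_sub (by omega : 1 ≤ n), Nat.cast_one] at this
    have hkey : Real.cos (2*Real.pi*i/n) ≤ Real.cos (2*Real.pi/n) := by
      have hlow : 2*Real.pi/n ≤ 2*Real.pi*i/n := by
        rw [div_le_div_iff_of_pos_right hn0]
        nlinarith
      have hup : 2*Real.pi*i/n ≤ 2*Real.pi - 2*Real.pi/n := by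
        have h : 2*Real.pi*(i:ℝ) ≤ 2*Real.pi*((n:ℝ)-1) := by nlinarith
        calc 2*Real.pi*i/n ≤ 2*Real.pi*((n:ℝ)-1)/n := by
              exact (div_le_div_iff_of_pos_right hn0).mpr h
          _ = 2*Real.pi - 2*Real.pi/n := by field_simp
      have hnn2 : (0:ℝ) ≤ 2*Real.pi/n := by positivity
      rcases le_or_gt (2*Real.pi*i/n) Real.pi with h|h
      · exact Real.cos_le_cos_of_nonneg_of_le_pi hnn2 h hlow
      · have e : Real.cos (2*Real.pi*i/n) = Real.cos (2*Real.pi - 2*Real.pi*i/n) := by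
          rw [show 2*Real.pi - 2*Real.pi*(i:ℝ)/n = -(2*Real.pi*i/n) + (1:ℤ)*(2*Real.pi) by
            push_cast; ring, Real.cos_add_int_mul_two_pi, Real.cos_neg]
        rw [e]
        exact Real.cos_le_cos_of_nonneg_of_le_pi hnn2 (by linarith) (by linarith)
    have : (0:ℝ) ≤ 2*Real.cos (2*Real.pi/n) - 2*Real.cos (2*Real.pi*i/n) := by linarith
    exact div_nonneg this (le_of_lt hn0)
  -- PSD of each matrix in the combination
  have hM : ∀ i ∈ Finset.Icc 1 (n-1),
      Matrix.PosSemidef ((1 : Matrix (Fin n) (Fin n) ℝ) +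
        ∑ k ∈ Finset.Icc 1 d, Real.cos (2 * Real.pi * i * k / n) • X k) := by
    intro i hi
    rw [Finset.mem_Icc] at hi
    by_cases hic : i ≤ d
    · exact hlmi i (Finset.mem_Icc.mpr ⟨hi.1, hic⟩)
    · have h2 : n - i ∈ Finset.Icc 1 d := Finset.mem_Icc.mpr ⟨by omega, by omega⟩
      have heq : (∑ k ∈ Finset.Icc 1 d, Real.cos (2 * Real.pi * i * k / n) • X k)
          = ∑ k ∈ Finset.Icc 1 d, Real.cos (2 * Real.pi * (n-i : ℕ) * k / n) • X k := by
        refine Finset.sum_congr rfl fun k _ => ?_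
        congr 1
        have e : (2*Real.pi*((n-i:ℕ):ℝ)*k/n : ℝ)
            = -(2*Real.pi*i*k/n) + ((k:ℤ):ℝ)*(2*Real.pi) := by
          push_cast [Nat.cast_sub (by omega : i ≤ n)]
          field_simp
          ring
        rw [e, Real.cos_add_int_mul_two_pi, Real.cos_neg]
      rw [heq]
      exact hlmi (n-i) h2
  have comb :
      x0 • ((1 : Matrix (Fin n) (Fin n) ℝ) + ∑ k ∈ Finset.Icc 1 d, X k)
        + ∑ i ∈ Finset.Icc 1 (n-1), w i • ((1 : Matrix (Fin n) (Fin n) ℝ) +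
            ∑ k ∈ Finset.Icc 1 d, Real.cos (2 * Real.pi * i * k / n) • X k)
      = (x0 + ∑ i ∈ Finset.Icc 1 (n-1), w i) • (1 : Matrix (Fin n) (Fin n) ℝ)
        + ∑ k ∈ Finset.Icc 1 d,
            (x0 + ∑ i ∈ Finset.Icc 1 (n-1),
              w i * Real.cos (2 * Real.pi * i * k / n)) • X k := by
    simp only [smul_add, Finset.smul_sum, smul_smul, Finset.sum_add_distrib, add_smul,
      Finset.sum_smul]
    rw [Finset.sum_comm]
    abel
  have hABmat :
      (x0 + ∑ i ∈ Finset.Icc 1 (n-1), w i) • (1 : Matrix (Fin n) (Fin n) ℝ)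
        + ∑ k ∈ Finset.Icc 1 d,
            (x0 + ∑ i ∈ Finset.Icc 1 (n-1),
              w i * Real.cos (2 * Real.pi * i * k / n)) • X k
      = (2 : ℝ) • (1 : Matrix (Fin n) (Fin n) ℝ) - X 1
          + (2 - 2 * Real.cos (2 * Real.pi / n)) • (∑ k ∈ Finset.Icc 1 d, X k) := by
    have hA : x0 + ∑ i ∈ Finset.Icc 1 (n-1), w i = 2 := by
      simp only [hx0def, hwdef]
      exact coefA n hn
    have hB : ∀ k ∈ Finset.Icc 1 d,
        (x0 + ∑ i ∈ Finset.Icc 1 (n-1), w i * Real.cos (2 * Real.pi * i * k / n)) • X k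
        = ((2 - 2 * Real.cos (2 * Real.pi / n)) - (if k = 1 then (1:ℝ) else 0)) • X k := by
      intro k hk
      rw [Finset.mem_Icc] at hk
      congr 1
      simp only [hx0def, hwdef]
      exact coefB n hn d hd k hk.1 hk.2
    rw [hA, Finset.sum_congr rfl hB]
    simp only [sub_smul, ite_smul, one_smul, zero_smul, Finset.sum_sub_distrib,
      Finset.smul_sum]
    rw [Finset.sum_ite_eq' (Finset.Icc 1 d) 1 X, if_pos h1F]
    abel
  have hJeq : (1 : Matrix (Fin n) (Fin n) ℝ) + ∑ k ∈ Finset.Icc 1 d, X k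
      = Matrix.of (fun _ _ => (1:ℝ)) := by
    rw [hsum]
    abel
  have main : (2 : ℝ) • (1 : Matrix (Fin n) (Fin n) ℝ) - X 1 +
        (2 - 2 * Real.cos (2 * Real.pi / n)) •
          (Matrix.of (fun _ _ => (1 : ℝ)) - (1 : Matrix (Fin n) (Fin n) ℝ))
      = x0 • (Matrix.of (fun _ _ => (1:ℝ)) : Matrix (Fin n) (Fin n) ℝ)
        + ∑ i ∈ Finset.Icc 1 (n-1), w i • ((1 : Matrix (Fin n) (Fin n) ℝ) +
            ∑ k ∈ Finset.Icc 1 d, Real.cos (2 * Real.pi * i * k / n) • X k) := by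
    calc (2 : ℝ) • (1 : Matrix (Fin n) (Fin n) ℝ) - X 1 +
        (2 - 2 * Real.cos (2 * Real.pi / n)) •
          (Matrix.of (fun _ _ => (1 : ℝ)) - (1 : Matrix (Fin n) (Fin n) ℝ))
        = (2 : ℝ) • (1 : Matrix (Fin n) (Fin n) ℝ) - X 1
            + (2 - 2 * Real.cos (2 * Real.pi / n)) • (∑ k ∈ Finset.Icc 1 d, X k) := by
          rw [hsum]
      _ = (x0 + ∑ i ∈ Finset.Icc 1 (n-1), w i) • (1 : Matrix (Fin n) (Fin n) ℝ)
            + ∑ k ∈ Finset.Icc 1 d,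
                (x0 + ∑ i ∈ Finset.Icc 1 (n-1),
                  w i * Real.cos (2 * Real.pi * i * k / n)) • X k := hABmat.symm
      _ = x0 • ((1 : Matrix (Fin n) (Fin n) ℝ) + ∑ k ∈ Finset.Icc 1 d, X k)
            + ∑ i ∈ Finset.Icc 1 (n-1), w i • ((1 : Matrix (Fin n) (Fin n) ℝ) +
                ∑ k ∈ Finset.Icc 1 d, Real.cos (2 * Real.pi * i * k / n) • X k) := comb.symm
      _ = _ := by rw [hJeq]
  rw [main]
  exact psdAdd (psdSmul psdJ hx0)
    (psdSum _ _ fun i hi => psdSmul (hM i hi) (hw i hi))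
end

section
/- The adjacency matrix X of any Hamiltonian circuit on n ≥ 3 vertices satisfies the Cvetković et al. SDP constraints: Xe = 2e, diag(X) = 0, 0 ≤ X ≤ J entrywise, and 2I - X + (2 - 2cos(2π/n))(J - I) ⪰ 0. -/
open Matrix Complex Finset

/-- The adjacency matrix `C₁` of the standard cycle on `n` vertices. -/
def cycleAdj (n : ℕ) : Matrix (Fin n) (Fin n) ℝ :=
  Matrix.of fun i j =>
    if (j.val + n - i.val) % n = 1 ∨ (i.val + n - j.val) % n = 1 then 1 else 0


lemma cos_bound_half (n k : ℕ) (hn : 3 ≤ n) (hk1 : 1 ≤ k) (hk2 : 2 * k ≤ n) :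
    Real.cos (2 * Real.pi * k / n) ≤ Real.cos (2 * Real.pi / n) := by
  have hn0 : (0:ℝ) < n := by positivity
  apply Real.cos_le_cos_of_nonneg_of_le_pi
  · positivity
  · rw [div_le_iff₀ hn0]
    have : (2:ℝ) * k ≤ n := by exact_mod_cast hk2
    nlinarith [Real.pi_pos]
  · rw [div_le_div_iff₀ hn0 hn0]
    have : (1:ℝ) ≤ k := by exact_mod_cast hk1
    nlinarith [mul_nonneg (mul_nonneg Real.pi_pos.le hn0.le) (sub_nonneg.mpr this)]

lemma cos_bound (n k : ℕ) (hn : 3 ≤ n) (hk1 : 1 ≤ k) (hk2 : k ≤ n - 1) :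
    Real.cos (2 * Real.pi * k / n) ≤ Real.cos (2 * Real.pi / n) := by
  rcases le_or_gt (2 * k) n with h | h
  · exact cos_bound_half n k hn hk1 h
  · have hkn : k ≤ n := by omega
    have hn0 : (0:ℝ) < n := by positivity
    have key : 2 * Real.pi * k / n = 2 * Real.pi - 2 * Real.pi * (n - k : ℕ) / n := by
      have : ((n - k : ℕ) : ℝ) = (n : ℝ) - k := by
        push_cast [Nat.cast_sub hkn]; ring
      rw [this]
      field_simp
      ring
    rw [key, Real.cos_two_pi_sub]
    exact cos_bound_half n (n - k) hn (by omega) (by omega)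



noncomputable def four (n : ℕ) (x : Fin n → ℝ) (k : Fin n) : ℂ :=
  ∑ j, (x j : ℂ) * Complex.exp (2 * Real.pi * Complex.I * k * j / n)

lemma sum_root (n : ℕ) (hn : 0 < n) (m : ℤ) :
    ∑ j : Fin n, Complex.exp (2 * Real.pi * Complex.I * m * j / n) =
      if (n:ℤ) ∣ m then (n:ℂ) else 0 := by
  have hn' : (n:ℂ) ≠ 0 := Nat.cast_ne_zero.mpr hn.ne'
  set ζ : ℂ := Complex.exp (2 * Real.pi * Complex.I * m / n) with hζ
  have hterm : ∀ j : Fin n, Complex.exp (2 * Real.pi * Complex.I * m * j / n) = ζ ^ (j : ℕ) := by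
    intro j
    rw [hζ, ← Complex.exp_nat_mul]
    ring_nf
  have hζn : ζ ^ n = 1 := by
    rw [hζ, ← Complex.exp_nat_mul]
    have : (n:ℂ) * (2 * Real.pi * Complex.I * m / n) = m * (2 * Real.pi * Complex.I) := by
      field_simp
    rw [this, Complex.exp_int_mul_two_pi_mul_I]
  simp only [hterm]
  rw [Fin.sum_univ_eq_sum_range (fun j => ζ ^ j)]
  by_cases hd : (n:ℤ) ∣ m
  · obtain ⟨t, ht⟩ := id hd
    have hz1 : ζ = 1 := by
      rw [hζ, ht]
      push_cast
      rw [show 2 * (Real.pi:ℂ) * Complex.I * ((n:ℂ) * t) / n = t * (2 * Real.pi * Complex.I) by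
        field_simp]
      exact Complex.exp_int_mul_two_pi_mul_I t
    simp [hz1, hd]
  · have hζ1 : ζ ≠ 1 := by
      intro h
      rw [hζ, Complex.exp_eq_one_iff] at h
      obtain ⟨k, hk⟩ := h
      apply hd
      refine ⟨k, ?_⟩
      have : (m:ℂ) = n * k := by
        have h2 : (2:ℂ) * Real.pi * Complex.I ≠ 0 := by
          simp [Real.pi_ne_zero, Complex.I_ne_zero]
        field_simp at hk
        have h3 : (m:ℂ) * (2 * Real.pi * Complex.I) = ((n:ℂ) * k) * (2 * Real.pi * Complex.I) := by
          linear_combination (2 * Real.pi * Complex.I) * hk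
        exact mul_right_cancel₀ h2 h3
      exact_mod_cast this
    rw [geom_sum_eq hζ1, hζn]
    simp [hd]


lemma e_orth (n : ℕ) (hn : 0 < n) (j j' : Fin n) :
    ∑ k : Fin n, Complex.exp (2 * Real.pi * Complex.I * k * j / n) *
      (starRingEnd ℂ) (Complex.exp (2 * Real.pi * Complex.I * k * j' / n)) =
      if j = j' then (n:ℂ) else 0 := by
  have h := sum_root n hn ((j:ℤ) - (j':ℤ))
  push_cast at h
  have hterm : ∀ k : Fin n,
      Complex.exp (2 * Real.pi * Complex.I * k * j / n) *
        (starRingEnd ℂ) (Complex.exp (2 * Real.pi * Complex.I * k * j' / n)) =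
      Complex.exp (2 * Real.pi * Complex.I * ((j:ℤ) - (j':ℤ)) * k / n) := by
    intro k
    rw [← Complex.exp_conj, ← Complex.exp_add]
    congr 1
    have h2 : (starRingEnd ℂ) (2 * Real.pi * Complex.I * k * j' / n) =
        2 * Real.pi * (-Complex.I) * k * j' / n := by
      simp [map_div₀, _root_.map_mul, Complex.conj_I, map_ofNat]
    rw [h2]
    push_cast
    ring
  push_cast at hterm
  simp only [hterm]
  rw [h]
  have hdvd : (n:ℤ) ∣ ((j:ℤ) - (j':ℤ)) ↔ j = j' := by
    constructor
    · rintro ⟨t, ht⟩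
      have hj := j.isLt
      have hj' := j'.isLt
      have h1 : ((j:ℤ) : ℤ) - (j':ℤ) < n := by omega
      have h2 : -(n:ℤ) < (j:ℤ) - (j':ℤ) := by omega
      rw [ht] at h1 h2
      have hn' : (0:ℤ) < n := by exact_mod_cast hn
      have ht1 : t < 1 := by nlinarith
      have ht2 : -1 < t := by nlinarith
      have : t = 0 := by omega
      rw [this, mul_zero] at ht
      have : (j:ℤ) = (j':ℤ) := by omega
      exact Fin.ext (by exact_mod_cast this)
    · rintro rfl; simp
  simp only [hdvd]

lemma parseval (n : ℕ) (hn : 0 < n) (x : Fin n → ℝ) :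
    ∑ k, Complex.normSq (four n x k) = n * ∑ j, (x j)^2 := by
  have key : ∑ k, (four n x k * (starRingEnd ℂ) (four n x k)) = (n:ℂ) * ∑ j, ((x j):ℂ)^2 := by
    have expand : ∀ k : Fin n, four n x k * (starRingEnd ℂ) (four n x k) =
        ∑ j, ∑ j', ((x j : ℂ) * (x j' : ℂ)) *
          (Complex.exp (2 * Real.pi * Complex.I * k * j / n) *
            (starRingEnd ℂ) (Complex.exp (2 * Real.pi * Complex.I * k * j' / n))) := by
      intro k
      rw [four, map_sum, Finset.sum_mul_sum]
      refine Finset.sum_congr rfl fun j _ => Finset.sum_congr rfl fun j' _ => ?_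
      rw [_root_.map_mul, Complex.conj_ofReal]
      ring
    simp only [expand]
    rw [Finset.sum_comm]
    have swap2 : ∀ j : Fin n, ∑ k : Fin n, ∑ j', ((x j : ℂ) * (x j' : ℂ)) *
          (Complex.exp (2 * Real.pi * Complex.I * k * j / n) *
            (starRingEnd ℂ) (Complex.exp (2 * Real.pi * Complex.I * k * j' / n))) =
        ∑ j', ((x j : ℂ) * (x j' : ℂ)) * (if j = j' then (n:ℂ) else 0) := by
      intro j
      rw [Finset.sum_comm]
      refine Finset.sum_congr rfl fun j' _ => ?_
      rw [← e_orth n hn j j', Finset.mul_sum]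
    simp only [swap2, mul_ite, mul_zero]
    rw [Finset.mul_sum]
    refine Finset.sum_congr rfl fun j _ => ?_
    rw [Finset.sum_ite_eq univ j (fun j' => (x j : ℂ) * (x j' : ℂ) * n)]
    simp only [mem_univ, if_true]
    ring
  have cast1 : ((∑ k, Complex.normSq (four n x k) : ℝ) : ℂ) = ((n * ∑ j, (x j)^2 : ℝ) : ℂ) := by
    push_cast
    simp only [← Complex.mul_conj] at *
    convert key using 2
  exact_mod_cast cast1

lemma exp_congr (n : ℕ) (hn : 0 < n) (k : ℕ) (a b : ℤ) (h : (n:ℤ) ∣ (a - b)) :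
    Complex.exp (2 * Real.pi * Complex.I * k * a / n) =
      Complex.exp (2 * Real.pi * Complex.I * k * b / n) := by
  obtain ⟨t, ht⟩ := h
  rw [Complex.exp_eq_exp_iff_exists_int]
  refine ⟨k * t, ?_⟩
  have hn' : (n:ℂ) ≠ 0 := Nat.cast_ne_zero.mpr hn.ne'
  have ha : (a:ℂ) = b + n * t := by
    have : (a:ℤ) = b + n * t := by omega
    exact_mod_cast this
  rw [ha]
  push_cast
  field_simp

lemma e_shift (n : ℕ) [NeZero n] (hn : 2 ≤ n) (k j : Fin n) :
    Complex.exp (2 * Real.pi * Complex.I * k * ((j + 1 : Fin n) : ℕ) / n) =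
      Complex.exp (2 * Real.pi * Complex.I * k / n) *
        Complex.exp (2 * Real.pi * Complex.I * k * j / n) := by
  have hn0 : 0 < n := by omega
  have hdvd : (n:ℤ) ∣ (((j + 1 : Fin n) : ℕ) : ℤ) - ((j : ℕ) + 1 : ℤ) := by
    have hval : ((j + 1 : Fin n) : ℕ) = (j.val + 1) % n := by
      rw [Fin.add_def]
      simp only [Fin.val_one']
      rw [Nat.mod_eq_of_lt (show 1 < n by omega)]
    rw [hval]
    have hm : (((j.val + 1) % n : ℕ) : ℤ) = ((j.val + 1 : ℕ) : ℤ) % n := by push_cast; rfl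
    rw [hm, Int.emod_def]
    refine ⟨-(((j.val + 1 : ℕ) : ℤ) / n), ?_⟩
    push_cast
    ring
  have h1 := exp_congr n hn0 k (((j + 1 : Fin n) : ℕ) : ℤ) ((j : ℕ) + 1 : ℤ) hdvd
  push_cast at h1
  rw [h1, ← Complex.exp_add]
  congr 1
  have hn' : (n:ℂ) ≠ 0 := Nat.cast_ne_zero.mpr hn0.ne'
  field_simp
  ring

lemma four_shift (n : ℕ) [NeZero n] (hn : 2 ≤ n) (x : Fin n → ℝ) (k : Fin n) :
    four n x k = Complex.exp (2 * Real.pi * Complex.I * k / n) *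
      four n (fun j => x (j + 1)) k := by
  rw [four, four, Finset.mul_sum]
  refine Fintype.sum_equiv (Equiv.subRight (1 : Fin n)) _ _ fun j => ?_
  simp only [Equiv.subRight_apply]
  have h := e_shift n hn k (j - 1)
  rw [sub_add_cancel] at h
  rw [sub_add_cancel, h]
  ring

lemma normSq_exp_sub_one (θ : ℝ) :
    Complex.normSq (Complex.exp (θ * Complex.I) - 1) = 2 - 2 * Real.cos θ := by
  rw [Complex.exp_mul_I, ← Complex.ofReal_cos, ← Complex.ofReal_sin]
  rw [show ((Real.cos θ : ℂ)) + ((Real.sin θ : ℂ)) * Complex.I - 1 =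
      ((Real.cos θ - 1 : ℝ) : ℂ) + ((Real.sin θ : ℝ) : ℂ) * Complex.I by push_cast; ring]
  rw [Complex.normSq_add_mul_I]
  nlinarith [Real.sin_sq_add_cos_sq θ]

lemma wirtinger (n : ℕ) [NeZero n] (hn : 3 ≤ n) (x : Fin n → ℝ) :
    (2 - 2 * Real.cos (2 * Real.pi / n)) * (∑ j, (x j)^2) ≤
      (∑ j, (x j - x (j + 1))^2) + (2 - 2 * Real.cos (2 * Real.pi / n)) * (∑ j, x j)^2 := by
  have hn0 : 0 < n := by omega
  have hn2 : 2 ≤ n := by omega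
  set c := 2 - 2 * Real.cos (2 * Real.pi / n) with hc_def
  have hc : 0 ≤ c := by
    have := Real.cos_le_one (2 * Real.pi / n)
    simp only [hc_def]; linarith
  set z : Fin n → ℝ := fun j => x j - x (j + 1) with hz_def
  -- E k as exp(θ_k * I)
  have hE : ∀ k : Fin n, Complex.exp (2 * Real.pi * Complex.I * k / n) =
      Complex.exp (((2 * Real.pi * k / n : ℝ) : ℂ) * Complex.I) := by
    intro k; congr 1; push_cast; ring
  have hEabs : ∀ k : Fin n,
      Complex.normSq (Complex.exp (2 * Real.pi * Complex.I * k / n)) = 1 := by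
    intro k
    rw [hE k, Complex.normSq_eq_norm_sq, Complex.norm_exp_ofReal_mul_I]
    norm_num
  have hlin : ∀ k, four n z k = four n x k - four n (fun j => x (j + 1)) k := by
    intro k
    rw [four, four, four, ← Finset.sum_sub_distrib]
    refine Finset.sum_congr rfl fun j _ => ?_
    simp only [hz_def]
    push_cast
    ring
  have key : ∀ k : Fin n, Complex.normSq (four n z k) =
      (2 - 2 * Real.cos (2 * Real.pi * k / n)) * Complex.normSq (four n x k) := by
    intro k
    have h1 : four n z k = (Complex.exp (((2 * Real.pi * k / n : ℝ) : ℂ) * Complex.I) - 1) *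
        four n (fun j => x (j + 1)) k := by
      rw [hlin k, four_shift n hn2 x k, ← hE k]
      ring
    have h2 : Complex.normSq (four n x k) = Complex.normSq (four n (fun j => x (j + 1)) k) := by
      rw [four_shift n hn2 x k, Complex.normSq_mul, hEabs k, one_mul]
    rw [h1, Complex.normSq_mul, normSq_exp_sub_one, h2]
  -- Parseval for z and x
  have pz := parseval n hn0 z
  have px := parseval n hn0 x
  -- value at 0
  have h00 : ((0 : Fin n) : ℕ) = 0 := rfl
  have hN0 : Complex.normSq (four n x 0) = (∑ j, x j)^2 := by
    have : four n x 0 = ((∑ j, x j : ℝ) : ℂ) := by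
      rw [four]
      push_cast
      refine Finset.sum_congr rfl fun j _ => ?_
      rw [h00]
      push_cast
      rw [show 2 * (Real.pi:ℂ) * Complex.I * 0 * j / n = 0 by ring, Complex.exp_zero, mul_one]
    rw [this, Complex.normSq_ofReal]
    ring
  -- termwise bound
  have hterm : ∀ k : Fin n, (if k = 0 then (0:ℝ) else c) * Complex.normSq (four n x k) ≤
      Complex.normSq (four n z k) := by
    intro k
    rw [key k]
    by_cases hk : k = 0
    · simp [hk, Complex.normSq_nonneg]
    · rw [if_neg hk]
      refine mul_le_mul_of_nonneg_right ?_ (Complex.normSq_nonneg _)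
      have hk1 : 1 ≤ k.val := by
        rcases Nat.eq_zero_or_pos k.val with h | h
        · exact absurd (Fin.ext (by simp [h, h00])) hk
        · exact h
      have := cos_bound n k.val hn hk1 (by have := k.isLt; omega)
      simp only [hc_def]
      linarith
  have hsum := Finset.sum_le_sum (fun k (_ : k ∈ univ) => hterm k)
  -- compute LHS of hsum
  have hL : ∑ k : Fin n, (if k = 0 then (0:ℝ) else c) * Complex.normSq (four n x k) =
      c * (n * ∑ j, (x j)^2) - c * (∑ j, x j)^2 := by
    have hsplit : ∀ k : Fin n, (if k = 0 then (0:ℝ) else c) * Complex.normSq (four n x k) =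
        c * Complex.normSq (four n x k) -
          (if k = 0 then c * Complex.normSq (four n x k) else 0) := by
      intro k; by_cases h : k = 0 <;> simp [h]
    simp only [hsplit]
    rw [Finset.sum_sub_distrib, Finset.sum_ite_eq' univ (0 : Fin n)
      (fun k => c * Complex.normSq (four n x k))]
    rw [← Finset.mul_sum, px, hN0]
    simp
  rw [hL, pz] at hsum
  have hn3 : (3:ℝ) ≤ n := by exact_mod_cast hn
  have hS := sq_nonneg (∑ j, x j)
  nlinarith [mul_nonneg hc hS]



lemma cycleAdj_eq (n : ℕ) [NeZero n] (hn : 2 ≤ n) (i j : Fin n) :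
    cycleAdj n i j = if j = i + 1 ∨ j = i - 1 then 1 else 0 := by
  have hsub : ∀ a b : Fin n, ((a.val + n - b.val) % n = 1) ↔ a - b = 1 := by
    intro a b
    have hb : b.val < n := b.isLt
    have h1 : a.val + n - b.val = a.val + (n - b.val) := by omega
    rw [h1]
    have hv : (a - b).val = (a.val + (n - b.val)) % n := by
      rw [Fin.sub_def]
      simp [Nat.add_comm]
    have h1v : (1 : Fin n).val = 1 := by
      rw [Fin.val_one']
      exact Nat.mod_eq_of_lt (by omega)
    rw [Fin.ext_iff, hv, h1v]
  have e1 : ((j.val + n - i.val) % n = 1) ↔ j = i + 1 := by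
    rw [hsub j i, sub_eq_iff_eq_add, add_comm]
  have e2 : ((i.val + n - j.val) % n = 1) ↔ j = i - 1 := by
    rw [hsub i j, sub_eq_iff_eq_add]
    constructor
    · intro h; rw [h]; abel
    · intro h; rw [h]; abel
  rw [cycleAdj]
  simp only [Matrix.of_apply]
  rw [if_congr (or_congr e1 e2) rfl rfl]

lemma cycleAdj_symm (n : ℕ) : (cycleAdj n)ᵀ = cycleAdj n := by
  ext i j
  simp only [Matrix.transpose_apply, cycleAdj, Matrix.of_apply]
  rw [if_congr or_comm rfl rfl]

lemma cycleAdj_row (n : ℕ) [NeZero n] (hn : 3 ≤ n) (r : Fin n) (f : Fin n → ℝ) :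
    ∑ j, cycleAdj n r j * f j = f (r + 1) + f (r - 1) := by
  have hne : (r + 1 : Fin n) ≠ r - 1 := by
    intro h
    have h2 : (2 : Fin n) = 0 := by
      have : (r + 1) - (r - 1) = (0 : Fin n) := by rw [h]; exact sub_self _
      calc (2 : Fin n) = (r + 1) - (r - 1) := by open Fin.CommRing in ring
        _ = 0 := this
    have hval := congrArg Fin.val h2
    rw [Fin.val_zero] at hval
    have h2v : (2 : Fin n).val = 2 % n := Fin.val_ofNat n 2
    have : 2 % n = 2 := Nat.mod_eq_of_lt (by omega)
    omega
  have hterm : ∀ j, cycleAdj n r j * f j =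
      (if j = r + 1 then f j else 0) + (if j = r - 1 then f j else 0) := by
    intro j
    rw [cycleAdj_eq n (by omega) r j]
    by_cases h1 : j = r + 1 <;> by_cases h2 : j = r - 1
    · exact absurd (h1 ▸ h2) hne
    · simp [h1, h2, hne, hne.symm]
    · simp [h1, h2, hne, hne.symm]
    · simp [h1, h2]
  simp only [hterm]
  rw [Finset.sum_add_distrib, Finset.sum_ite_eq' univ (r + 1) f,
    Finset.sum_ite_eq' univ (r - 1) f]
  simp

theorem stmt19 (n : ℕ) (hn : 3 ≤ n) (σ : Equiv.Perm (Fin n))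
    (P : Matrix (Fin n) (Fin n) ℝ)
    (hP : P = Matrix.of fun i j => if σ j = i then (1 : ℝ) else 0)
    (X : Matrix (Fin n) (Fin n) ℝ) (hX : X = P * cycleAdj n * Pᵀ)
    (J : Matrix (Fin n) (Fin n) ℝ) (hJ : J = Matrix.of fun _ _ => (1 : ℝ)) :
    X.mulVec (fun _ => 1) = (fun _ => 2) ∧
    (∀ i, X i i = 0) ∧
    (∀ i j, 0 ≤ X i j ∧ X i j ≤ J i j) ∧
    Matrix.PosSemidef
      ((2 : ℝ) • (1 : Matrix (Fin n) (Fin n) ℝ) - X +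
        (2 - 2 * Real.cos (2 * Real.pi / n)) • (J - 1)) := by
  haveI : NeZero n := ⟨by omega⟩
  set c := 2 - 2 * Real.cos (2 * Real.pi / n) with hc_def
  -- conjugation entry formulas
  have hPmul : ∀ (M : Matrix (Fin n) (Fin n) ℝ) (i l : Fin n),
      (P * M) i l = M (σ.symm i) l := by
    intro M i l
    rw [Matrix.mul_apply, hP]
    have : ∀ k : Fin n, (Matrix.of fun i j => if σ j = i then (1:ℝ) else 0) i k * M k l =
        if k = σ.symm i then M k l else 0 := by
      intro k
      simp only [Matrix.of_apply]
      by_cases h : k = σ.symm i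
      · rw [if_pos h, if_pos (by rw [h]; simp), one_mul]
      · rw [if_neg h, if_neg (fun hh => h (by rw [← hh]; simp)), zero_mul]
    simp only [this]
    rw [Finset.sum_ite_eq' univ (σ.symm i) (fun k => M k l)]
    simp
  have hmulPT : ∀ (M : Matrix (Fin n) (Fin n) ℝ) (i l : Fin n),
      (M * Pᵀ) i l = M i (σ.symm l) := by
    intro M i l
    rw [Matrix.mul_apply, hP]
    have : ∀ k : Fin n, M i k * (Matrix.of fun i j => if σ j = i then (1:ℝ) else 0)ᵀ k l =
        if k = σ.symm l then M i k else 0 := by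
      intro k
      simp only [Matrix.transpose_apply, Matrix.of_apply]
      by_cases h : k = σ.symm l
      · rw [if_pos h, if_pos (by rw [h]; simp), mul_one]
      · rw [if_neg h, if_neg (fun hh => h (by rw [← hh]; simp)), mul_zero]
    simp only [this]
    rw [Finset.sum_ite_eq' univ (σ.symm l) (fun k => M i k)]
    simp
  have hconj : ∀ (M : Matrix (Fin n) (Fin n) ℝ) (i j : Fin n),
      (P * M * Pᵀ) i j = M (σ.symm i) (σ.symm j) := by
    intro M i j
    rw [hmulPT (P * M) i j, hPmul M i (σ.symm j)]
  have hXe : ∀ i j, X i j = cycleAdj n (σ.symm i) (σ.symm j) := by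
    intro i j; rw [hX, hconj]
  -- Part 1
  have part1 : X.mulVec (fun _ => 1) = (fun _ => 2) := by
    funext i
    rw [Matrix.mulVec, dotProduct]
    simp only [mul_one, hXe]
    rw [Fintype.sum_equiv σ.symm (fun j => cycleAdj n (σ.symm i) (σ.symm j))
      (fun j => cycleAdj n (σ.symm i) j) (fun j => rfl)]
    have := cycleAdj_row n hn (σ.symm i) (fun _ => (1:ℝ))
    simp only [mul_one] at this
    rw [this]
    norm_num
  -- Part 2
  have part2 : ∀ i, X i i = 0 := by
    intro i
    rw [hXe]
    set r := σ.symm i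
    rw [cycleAdj_eq n (by omega) r r]
    rw [if_neg]
    push_neg
    constructor
    · intro h
      have : (1 : Fin n) = 0 := by
        have := congrArg (fun t => t - r) h
        simpa using this.symm
      have hv := congrArg Fin.val this
      rw [Fin.val_one', Fin.val_zero, Nat.mod_eq_of_lt (by omega)] at hv
      omega
    · intro h
      have : (1 : Fin n) = 0 := by
        have := congrArg (fun t => r - t) h
        simpa using this
      have hv := congrArg Fin.val this
      rw [Fin.val_one', Fin.val_zero, Nat.mod_eq_of_lt (by omega)] at hv
      omega
  -- Part 3
  have part3 : ∀ i j, 0 ≤ X i j ∧ X i j ≤ J i j := by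
    intro i j
    rw [hXe, hJ, cycleAdj_eq n (by omega)]
    by_cases h : σ.symm j = σ.symm i + 1 ∨ σ.symm j = σ.symm i - 1 <;>
      simp [h, Matrix.of_apply]
  -- Part 4
  have hJ1 : P * J * Pᵀ = J := by
    ext i j; rw [hconj, hJ]; rfl
  have hone1 : ∀ i j : Fin n, (1 : Matrix (Fin n) (Fin n) ℝ) (σ.symm i) (σ.symm j) =
      (1 : Matrix (Fin n) (Fin n) ℝ) i j := by
    intro i j
    rcases eq_or_ne i j with h | h
    · subst h; rw [Matrix.one_apply_eq, Matrix.one_apply_eq]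
    · rw [Matrix.one_apply_ne (fun hh => h (σ.symm.injective hh)), Matrix.one_apply_ne h]
  have hMX : (2 : ℝ) • (1 : Matrix (Fin n) (Fin n) ℝ) - X + c • (J - 1) =
      P * ((2 : ℝ) • (1 : Matrix (Fin n) (Fin n) ℝ) - cycleAdj n + c • (J - 1)) * Pᵀ := by
    ext i j
    rw [hconj]
    simp only [Matrix.add_apply, Matrix.sub_apply, Matrix.smul_apply, smul_eq_mul, hXe]
    have h2 : J (σ.symm i) (σ.symm j) = J i j := by rw [hJ]; rfl
    rw [hone1, h2]
  rw [hMX]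
  have hPT : Pᵀ = Pᴴ := by
    ext i j
    simp [Matrix.conjTranspose_apply, Matrix.transpose_apply]
  rw [hPT]
  refine And.intro part1 (And.intro part2 (And.intro part3 ?_))
  apply Matrix.PosSemidef.mul_mul_conjTranspose_same
  -- PSD of the cycle version
  rw [Matrix.posSemidef_iff_dotProduct_mulVec]
  constructor
  · -- Hermitian
    have hJsymm : Jᵀ = J := by ext i j; rw [hJ]; simp
    show _ᴴ = _
    have : ∀ (A : Matrix (Fin n) (Fin n) ℝ), Aᴴ = Aᵀ := by
      intro A; ext i j; simp [Matrix.conjTranspose_apply]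
    rw [this, Matrix.transpose_add, Matrix.transpose_sub, Matrix.transpose_smul,
      Matrix.transpose_smul, Matrix.transpose_one, Matrix.transpose_sub,
      Matrix.transpose_one, cycleAdj_symm, hJsymm]
  · intro x
    have hstar : star x = x := by funext i; simp
    rw [hstar]
    -- expand quadratic form
    rw [Matrix.add_mulVec, Matrix.sub_mulVec, Matrix.smul_mulVec,
      Matrix.smul_mulVec, Matrix.one_mulVec, Matrix.sub_mulVec, Matrix.one_mulVec,
      dotProduct_add, dotProduct_sub, dotProduct_smul,
      dotProduct_smul, dotProduct_sub]
    have hdx : x ⬝ᵥ x = ∑ j, (x j)^2 := by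
      rw [dotProduct]; exact Finset.sum_congr rfl fun j _ => (sq (x j)).symm ▸ (by ring)
    have hdC : x ⬝ᵥ (cycleAdj n).mulVec x = ∑ i, x i * (x (i + 1) + x (i - 1)) := by
      rw [dotProduct]
      refine Finset.sum_congr rfl fun i _ => ?_
      rw [Matrix.mulVec, dotProduct, cycleAdj_row n hn i x]
    have hdJ : x ⬝ᵥ J.mulVec x = (∑ j, x j)^2 := by
      rw [dotProduct]
      have : ∀ i, J.mulVec x i = ∑ j, x j := by
        intro i; rw [Matrix.mulVec, dotProduct, hJ]; simp
      simp only [this]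
      rw [← Finset.sum_mul]
      ring
    rw [hdx, hdC, hdJ]
    -- reindex: ∑ x i * x (i-1) = ∑ x (i+1) * x i
    have hre : ∑ i, x i * x (i - 1) = ∑ i, x i * x (i + 1) := by
      refine Fintype.sum_equiv (Equiv.subRight (1 : Fin n)) _ _ fun i => ?_
      simp only [Equiv.subRight_apply]
      rw [sub_add_cancel]
      ring
    have hre2 : ∑ i, (x (i + 1))^2 = ∑ i, (x i)^2 := by
      refine Fintype.sum_equiv (Equiv.addRight (1 : Fin n)) _ _ fun i => ?_
      simp only [Equiv.coe_addRight]
    have hsplit : ∑ i, x i * (x (i + 1) + x (i - 1)) = 2 * ∑ i, x i * x (i + 1) := by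
      rw [Finset.sum_congr rfl (fun i _ => mul_add (x i) (x (i+1)) (x (i-1))),
        Finset.sum_add_distrib, hre, two_mul]
    have hQ : ∑ i, (x i - x (i + 1))^2 =
        2 * ∑ i, (x i)^2 - 2 * ∑ i, x i * x (i + 1) := by
      have : ∀ i : Fin n, (x i - x (i + 1))^2 =
          (x i)^2 - 2 * (x i * x (i + 1)) + (x (i + 1))^2 := fun i => by ring
      simp only [this]
      rw [Finset.sum_add_distrib, Finset.sum_sub_distrib, hre2, ← Finset.mul_sum]
      ring
    have hw := wirtinger n hn x
    rw [← hc_def] at hw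
    rw [hQ] at hw
    rw [hsplit]
    simp only [smul_eq_mul]
    linarith [hw]
end
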